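/- Let m ≥ 2 and let w be a Sturmian or periodic word over {0,1} with slope α, and β = 1/(m+α). For any ε > 0 there exist a constant C, positive integers n_1 < n_2 < ... , and partitions λ^{(i)} of n_i, such that for all sufficiently large i: (1) |Φ(λ^{(i)}) − Φ_0(β) − 1| < ε; (2) n_{i+1} − n_i < C; and (3) λ^{(i)} has one of the following two forms for some integers r, j: λ^{(i)} = (j, (m−1)r + w_1 + ... + w_r, r, 1) with j ≥ (m−1)r + w_1 + ... + w_r and n_i = j + mr + w_1 + ... + w_r + 1, or λ^{(i)} = ((m−1)r + w_1 + ... + w_r, j, r, 1) with (m−1)r + w_1 + ... + w_r > j ≥ r and n_i = j + mr + w_1 + ... + w_r + 1. -/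

import Mathlib

open Filter

/-- `Φ₀(x) = 1/(xˣ (1-x)^{1-x})` (real exponents, with the convention `0⁰ = 1`). -/
noncomputable def Phi0 (x : ℝ) : ℝ := 1 / (x ^ x * (1 - x) ^ (1 - x))

/-- `Φ(x₁,…,x_d) = (x₁^{x₁} ⋯ x_d^{x_d})⁻¹` (real exponents, with `0⁰ = 1`). -/
noncomputable def PhiF {d : ℕ} (x : Fin d → ℝ) : ℝ := 1 / ∏ i, x i ^ x i

/-- `Φ(λ)` for a partition `λ` of `n`. -/
noncomputable def PhiPart {d : ℕ} (n : ℕ) (lam : Fin d → ℕ) : ℝ :=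
  PhiF fun i => (lam i : ℝ) / (n : ℝ)

/-- The number of distinct factors of length `n` of the infinite word `w = w₁w₂⋯`. -/
noncomputable def wordComplexity (w : ℕ → ℕ) (n : ℕ) : ℕ :=
  Set.ncard {s : Fin n → ℕ | ∃ i : ℕ, 1 ≤ i ∧ ∀ t : Fin n, s t = w (i + (t : ℕ))}

/-- `w` is a Sturmian word: its complexity is `n + 1` for every `n ≥ 1`. -/
def IsSturmian (w : ℕ → ℕ) : Prop := ∀ n : ℕ, 1 ≤ n → wordComplexity w n = n + 1

/-- `w` is a (nonzero) periodic word. -/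
def IsPeriodicWord (w : ℕ → ℕ) : Prop :=
  (∃ T : ℕ, 1 ≤ T ∧ ∀ i : ℕ, 1 ≤ i → w (i + T) = w i) ∧ ∃ i : ℕ, 1 ≤ i ∧ w i ≠ 0

/-- The slope `π(w) = lim (w₁ + ⋯ + wₙ)/n` of the word `w` equals `α`. -/
def HasSlope (w : ℕ → ℕ) (α : ℝ) : Prop :=
  Tendsto (fun n : ℕ => ((∑ i ∈ Finset.Icc 1 n, w i : ℕ) : ℝ) / (n : ℝ)) atTop (nhds α)

section AuxLemmas
open Real

lemma aux_xx_one {f : ℕ → ℝ} (hf : Tendsto f atTop (nhds 0))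
    (hpos : ∀ i, 0 < f i) :
    Tendsto (fun i => f i ^ f i) atTop (nhds 1) := by
  have h0 : Tendsto (fun x : ℝ => Real.exp (Real.log x * x)) (nhdsWithin 0 (Set.Ioi 0)) (nhds 1) := by
    have h := (Real.continuous_exp.continuousAt (x := 0)).tendsto.comp
      (by simpa using tendsto_log_mul_rpow_nhdsGT_zero (r := 1) one_pos)
    simpa [Function.comp_def] using h
  have h1 : Tendsto f atTop (nhdsWithin 0 (Set.Ioi 0)) :=
    tendsto_nhdsWithin_of_tendsto_nhds_of_eventually_within _ hf
      (Eventually.of_forall fun i => hpos i)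
  have := h0.comp h1
  refine this.congr fun i => ?_
  simp only [Function.comp]
  rw [Real.rpow_def_of_pos (hpos i), mul_comm]


lemma aux_phiPart_tendsto (x1 x2 x3 : ℝ) (h1 : 0 < x1) (h2 : 0 < x2) (h3 : 0 < x3)
    (a b c n : ℕ → ℕ) (hn1 : ∀ i, 1 ≤ n i)
    (hn : Tendsto (fun i => (n i : ℝ)) atTop atTop)
    (ha : Tendsto (fun i => (a i : ℝ) / (n i : ℝ)) atTop (nhds x1))
    (hb : Tendsto (fun i => (b i : ℝ) / (n i : ℝ)) atTop (nhds x2))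
    (hc : Tendsto (fun i => (c i : ℝ) / (n i : ℝ)) atTop (nhds x3)) :
    Tendsto (fun i => PhiPart (n i) ![a i, b i, c i, 1]) atTop
      (nhds (1 / (x1 ^ x1 * x2 ^ x2 * x3 ^ x3))) := by
  have hinv : Tendsto (fun i => (1 : ℝ) / (n i : ℝ)) atTop (nhds 0) :=
    tendsto_const_nhds.div_atTop hn
  have h4 : Tendsto (fun i => ((1 : ℝ) / (n i : ℝ)) ^ ((1 : ℝ) / (n i : ℝ))) atTop (nhds 1) :=
    aux_xx_one hinv (fun i => one_div_pos.mpr (by exact_mod_cast hn1 i))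
  have ta := ha.rpow ha (Or.inl h1.ne')
  have tb := hb.rpow hb (Or.inl h2.ne')
  have tc := hc.rpow hc (Or.inl h3.ne')
  have hprod := ((ta.mul tb).mul tc).mul h4
  have hne : x1 ^ x1 * x2 ^ x2 * x3 ^ x3 * 1 ≠ 0 := by
    have := Real.rpow_pos_of_pos h1 x1
    have := Real.rpow_pos_of_pos h2 x2
    have := Real.rpow_pos_of_pos h3 x3
    positivity
  have := (tendsto_const_nhds (x := (1:ℝ))).div hprod hne
  simp only [mul_one] at this
  refine this.congr fun i => ?_
  simp only [PhiPart, PhiF, Fin.prod_univ_four]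
  norm_num [Matrix.cons_val_zero, Matrix.cons_val_one, Matrix.cons_val_two, Matrix.cons_val_three]


lemma aux_phi0_pos (β : ℝ) (h0 : 0 < β) (h1 : β < 1) : 0 < Phi0 β := by
  have hb1 : (0:ℝ) < 1 - β := by linarith
  have := Real.rpow_pos_of_pos h0 β
  have := Real.rpow_pos_of_pos hb1 (1-β)
  unfold Phi0; positivity

lemma aux_log_phi0 (β : ℝ) (h0 : 0 < β) (h1 : β < 1) :
    Real.log (Phi0 β) = -(β * Real.log β + (1-β) * Real.log (1-β)) := by
  have hb1 : (0:ℝ) < 1 - β := by linarith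
  have p1 := Real.rpow_pos_of_pos h0 β
  have p2 := Real.rpow_pos_of_pos hb1 (1-β)
  unfold Phi0
  rw [one_div, Real.log_inv, Real.log_mul p1.ne' p2.ne',
    Real.log_rpow h0, Real.log_rpow hb1]

lemma aux_identity (β : ℝ) (h0 : 0 < β) (h1 : β < 1) :
    (1/(1 + Phi0 β)) ^ (1/(1 + Phi0 β)) *
      ((1-β) * Phi0 β/(1 + Phi0 β)) ^ ((1-β) * Phi0 β/(1 + Phi0 β)) *
      (β * Phi0 β/(1 + Phi0 β)) ^ (β * Phi0 β/(1 + Phi0 β)) = (1 + Phi0 β)⁻¹ := by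
  have hb1 : (0:ℝ) < 1 - β := by linarith
  have hA : 0 < Phi0 β := aux_phi0_pos β h0 h1
  set A := Phi0 β with hAdef
  have h1A : (0:ℝ) < 1 + A := by linarith
  have hx1 : (0:ℝ) < 1/(1+A) := by positivity
  have hx2 : (0:ℝ) < (1-β) * A/(1+A) := by positivity
  have hx3 : (0:ℝ) < β * A/(1+A) := by positivity
  have hlogA := aux_log_phi0 β h0 h1
  rw [Real.rpow_def_of_pos hx1, Real.rpow_def_of_pos hx2, Real.rpow_def_of_pos hx3,
    ← Real.exp_add, ← Real.exp_add,
    show (1+A)⁻¹ = Real.exp (-(Real.log (1+A))) by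
      rw [Real.exp_neg, Real.exp_log h1A]]
  congr 1
  have l1 : Real.log (1/(1+A)) = -Real.log (1+A) := by rw [one_div, Real.log_inv]
  have l2 : Real.log ((1-β) * A/(1+A)) = Real.log (1-β) + Real.log A - Real.log (1+A) := by
    rw [Real.log_div (by positivity) h1A.ne', Real.log_mul hb1.ne' hA.ne']
  have l3 : Real.log (β * A/(1+A)) = Real.log β + Real.log A - Real.log (1+A) := by
    rw [Real.log_div (by positivity) h1A.ne', Real.log_mul h0.ne' hA.ne']
  rw [l1, l2, l3, hlogA]
  field_simp
  ring

lemma aux_logA2 (γ : ℝ) (hγ : 2 ≤ γ) :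
    Real.log (Phi0 (1/γ)) = Real.log γ - (1 - 1/γ) * Real.log (γ - 1) := by
  have hγ0 : (0:ℝ) < γ := by linarith
  have h0 : (0:ℝ) < 1/γ := by positivity
  have h1 : 1/γ < 1 := by rw [div_lt_one hγ0]; linarith
  have hg1 : (0:ℝ) < γ - 1 := by linarith
  have e1 : (1:ℝ) - 1/γ = (γ-1)/γ := by field_simp
  rw [aux_log_phi0 _ h0 h1, e1, Real.log_div hg1.ne' hγ0.ne', one_div, Real.log_inv]
  field_simp
  ring

lemma aux_A_le (γ : ℝ) (hγ : 2 ≤ γ) : Phi0 (1/γ) ≤ γ := by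
  have hγ0 : (0:ℝ) < γ := by linarith
  have hA : 0 < Phi0 (1/γ) := aux_phi0_pos _ (by positivity) (by rw [div_lt_one hγ0]; linarith)
  have hlog := aux_logA2 γ hγ
  have h1 : (0:ℝ) ≤ (1 - 1/γ) * Real.log (γ - 1) := by
    apply mul_nonneg
    · have : 1/γ ≤ 1/(2:ℝ) := by apply one_div_le_one_div_of_le <;> linarith
      linarith
    · exact Real.log_nonneg (by linarith)
  have : Real.log (Phi0 (1/γ)) ≤ Real.log γ := by rw [hlog]; linarith
  calc Phi0 (1/γ) = Real.exp (Real.log (Phi0 (1/γ))) := (Real.exp_log hA).symm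
    _ ≤ Real.exp (Real.log γ) := Real.exp_le_exp.mpr this
    _ = γ := Real.exp_log hγ0

lemma aux_A_gt (γ : ℝ) (hγ : 2 < γ) : γ < (γ - 1) * Phi0 (1/γ) := by
  have hγ0 : (0:ℝ) < γ := by linarith
  have hg1 : (1:ℝ) < γ - 1 := by linarith
  have hA : 0 < Phi0 (1/γ) := aux_phi0_pos _ (by positivity) (by rw [div_lt_one hγ0]; linarith)
  have hlog := aux_logA2 γ hγ.le
  have key : Real.log γ < Real.log ((γ-1) * Phi0 (1/γ)) := by
    rw [Real.log_mul (by linarith) hA.ne', hlog]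
    have hlg : 0 < Real.log (γ - 1) := Real.log_pos hg1
    have : 1/γ > 0 := by positivity
    nlinarith
  calc γ = Real.exp (Real.log γ) := (Real.exp_log hγ0).symm
    _ < Real.exp (Real.log ((γ-1) * Phi0 (1/γ))) := Real.exp_lt_exp.mpr key
    _ = (γ-1) * Phi0 (1/γ) := Real.exp_log (by positivity)

lemma aux_phi0_half : Phi0 (1/2) = 2 := by
  unfold Phi0
  have : ((1:ℝ)/2) ^ ((1:ℝ)/2) * (1 - 1/2) ^ (1 - (1:ℝ)/2) = 1/2 := by
    norm_num
    rw [← Real.rpow_add (by norm_num)]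
    norm_num
  rw [this]; norm_num

lemma aux_div_eq (a n : ℕ → ℕ) (hn1 : ∀ i, 1 ≤ n i) :
    ∀ᶠ i in atTop, ((a i : ℝ)/(i:ℝ)) / ((n i : ℝ)/(i:ℝ)) = (a i : ℝ) / (n i : ℝ) := by
  filter_upwards [eventually_ge_atTop 1] with i hi
  have hi0 : (i:ℝ) ≠ 0 := by exact_mod_cast Nat.one_le_iff_ne_zero.mp hi
  have hn0 : (n i:ℝ) ≠ 0 := by exact_mod_cast Nat.one_le_iff_ne_zero.mp (hn1 i)
  field_simp

lemma aux_seq (m : ℕ) (hm : 2 ≤ m) (S : ℕ → ℕ) (hSmono : Monotone S)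
    (hSgap : ∀ i, S (i+1) ≤ S i + 1)
    (α c : ℝ) (hα0 : 0 ≤ α) (hc0 : 0 < c)
    (hSlim : Tendsto (fun i : ℕ => (S i : ℝ)/(i:ℝ)) atTop (nhds α))
    (jf : ℕ → ℕ) (hjmono : Monotone jf)
    (hjgap : ∀ i, (jf (i+1) : ℝ) - (jf i : ℝ) ≤ c + 1)
    (hjlim : Tendsto (fun i : ℕ => (jf i : ℝ)/(i:ℝ)) atTop (nhds c)) :
    StrictMono (fun i => jf i + m*i + S i + 1) ∧
    (∀ i, ((jf (i+1) + m*(i+1) + S (i+1) + 1 : ℕ) : ℝ) - (jf i + m*i + S i + 1 : ℕ) < c + m + 3) ∧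
    Tendsto (fun i : ℕ => ((jf i + m*i + S i + 1 : ℕ) : ℝ)) atTop atTop ∧
    Tendsto (fun i : ℕ => (jf i : ℝ)/((jf i + m*i + S i + 1 : ℕ) : ℝ)) atTop (nhds (c/(c+m+α))) ∧
    Tendsto (fun i : ℕ => (((m-1)*i + S i : ℕ) : ℝ)/((jf i + m*i + S i + 1 : ℕ) : ℝ)) atTop
      (nhds (((m:ℝ)-1+α)/(c+m+α))) ∧
    Tendsto (fun i : ℕ => (i : ℝ)/((jf i + m*i + S i + 1 : ℕ) : ℝ)) atTop (nhds (1/(c+m+α))) := by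
  set n : ℕ → ℕ := fun i => jf i + m*i + S i + 1 with hn
  have hn1 : ∀ i, 1 ≤ n i := fun i => by simp only [hn]; omega
  have hden : (0:ℝ) < c + m + α := by
    have : (2:ℝ) ≤ m := by exact_mod_cast hm
    linarith
  have hmono : StrictMono n := by
    apply strictMono_nat_of_lt_succ
    intro i
    have h1 : jf i ≤ jf (i+1) := hjmono (by omega)
    have h2 : S i ≤ S (i+1) := hSmono (by omega)
    have h3 : m*(i+1) = m*i + m := by ring
    show n i < n (i+1)
    simp only [hn]
    omega
  have hgap : ∀ i, ((n (i+1) : ℕ) : ℝ) - (n i : ℝ) < c + m + 3 := by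
    intro i
    have h1 := hjgap i
    have h2 := hSgap i
    have h2' : (S (i+1) : ℝ) ≤ (S i : ℝ) + 1 := by exact_mod_cast h2
    simp only [hn]
    push_cast
    linarith
  -- n i / i → c + m + α
  have hnlim : Tendsto (fun i : ℕ => (n i : ℝ)/(i:ℝ)) atTop (nhds (c + m + α)) := by
    have key : Tendsto (fun i : ℕ => (jf i : ℝ)/(i:ℝ) + (m:ℝ) + (S i : ℝ)/(i:ℝ) + 1/(i:ℝ))
        atTop (nhds (c + m + α)) := by
      have h4 : Tendsto (fun i : ℕ => 1/(i:ℝ)) atTop (nhds 0) :=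
        tendsto_const_nhds.div_atTop tendsto_natCast_atTop_atTop
      have := ((hjlim.add (tendsto_const_nhds (x := (m:ℝ)))).add hSlim).add h4
      simpa using this
    refine key.congr' ?_
    filter_upwards [eventually_ge_atTop 1] with i hi
    have hi0 : (i:ℝ) ≠ 0 := by exact_mod_cast Nat.one_le_iff_ne_zero.mp hi
    simp only [hn]
    push_cast
    field_simp
  have hntop : Tendsto (fun i : ℕ => (n i : ℝ)) atTop atTop := by
    apply tendsto_atTop_mono (f := fun i : ℕ => (i:ℝ))
    · intro i
      have : i ≤ n i := by simp [hn]; nlinarith [hm]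
      exact_mod_cast this
    · exact tendsto_natCast_atTop_atTop
  refine ⟨hmono, hgap, hntop, ?_, ?_, ?_⟩
  · exact ((hjlim.div hnlim hden.ne').congr' (aux_div_eq jf n hn1))
  · have hLlim : Tendsto (fun i : ℕ => (((m-1)*i + S i : ℕ) : ℝ)/(i:ℝ)) atTop
        (nhds ((m:ℝ)-1+α)) := by
      have key : Tendsto (fun i : ℕ => ((m:ℝ)-1) + (S i : ℝ)/(i:ℝ)) atTop (nhds ((m:ℝ)-1+α)) :=
        (tendsto_const_nhds (x := (m:ℝ)-1)).add hSlim
      refine key.congr' ?_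
      filter_upwards [eventually_ge_atTop 1] with i hi
      have hi0 : (i:ℝ) ≠ 0 := by exact_mod_cast Nat.one_le_iff_ne_zero.mp hi
      push_cast [Nat.cast_sub (show 1 ≤ m by omega)]
      field_simp
    exact ((hLlim.div hnlim hden.ne').congr' (aux_div_eq _ n hn1))
  · have hid : Tendsto (fun i : ℕ => (i : ℝ)/(i:ℝ)) atTop (nhds 1) := by
      refine tendsto_const_nhds.congr' ?_
      filter_upwards [eventually_ge_atTop 1] with i hi
      have hi0 : (i:ℝ) ≠ 0 := by exact_mod_cast Nat.one_le_iff_ne_zero.mp hi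
      simp [hi0]
    exact ((hid.div hnlim hden.ne').congr' (aux_div_eq _ n hn1))

end AuxLemmas

/-- Lemma 12: let `m ≥ 2`, `w` a Sturmian or periodic word with slope `α`, `β = 1/(m+α)`.
For any `ε > 0` there are a constant `C`, integers `n₁ < n₂ < ⋯` and partitions
`λ^{(i)} ⊢ n_i` such that, for all sufficiently large `i`:
`|Φ(λ^{(i)}) − Φ₀(β) − 1| < ε`; `n_{i+1} − n_i < C`; and `λ^{(i)}` has one of the two forms
`(j, (m−1)r + w₁ + ⋯ + w_r, r, 1)` with `j ≥ (m−1)r + w₁ + ⋯ + w_r`, or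
`((m−1)r + w₁ + ⋯ + w_r, j, r, 1)` with `(m−1)r + w₁ + ⋯ + w_r > j ≥ r`, where in both cases
`n_i = j + mr + w₁ + ⋯ + w_r + 1`. -/
theorem exists_partitions_phi_close (m : ℕ) (hm : 2 ≤ m) (w : ℕ → ℕ) (hw : ∀ i, w i ≤ 1)
    (hword : IsSturmian w ∨ IsPeriodicWord w)
    (α : ℝ) (hα : HasSlope w α) (β : ℝ) (hβ : β = 1 / ((m : ℝ) + α))
    (ε : ℝ) (hε : 0 < ε) :
    ∃ (C : ℝ) (nseq : ℕ → ℕ) (lam : ℕ → Fin 4 → ℕ),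
      StrictMono nseq ∧ (∀ i, 1 ≤ nseq i) ∧
      ∃ i0 : ℕ, ∀ i : ℕ, i0 ≤ i →
        |PhiPart (nseq i) (lam i) - Phi0 β - 1| < ε ∧
        ((nseq (i + 1) : ℝ) - (nseq i : ℝ) < C) ∧
        ∃ r j : ℕ,
          nseq i = j + m * r + (∑ s ∈ Finset.Icc 1 r, w s) + 1 ∧
          ((lam i = ![j, (m - 1) * r + ∑ s ∈ Finset.Icc 1 r, w s, r, 1] ∧
              (m - 1) * r + (∑ s ∈ Finset.Icc 1 r, w s) ≤ j) ∨
           (lam i = ![(m - 1) * r + ∑ s ∈ Finset.Icc 1 r, w s, j, r, 1] ∧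
              r ≤ j ∧ j < (m - 1) * r + ∑ s ∈ Finset.Icc 1 r, w s)) := by
  clear hword
  have hα0 : 0 ≤ α := ge_of_tendsto' hα (fun n => by positivity)
  have hSmono : Monotone (fun r => ∑ s ∈ Finset.Icc 1 r, w s) := by
    intro a b hab
    exact Finset.sum_le_sum_of_subset (Finset.Icc_subset_Icc le_rfl hab)
  have hSgap : ∀ i, (∑ s ∈ Finset.Icc 1 (i+1), w s) ≤ (∑ s ∈ Finset.Icc 1 i, w s) + 1 := by
    intro i
    rw [Finset.sum_Icc_succ_top (by omega : 1 ≤ i + 1)]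
    have := hw (i+1)
    omega
  have hSlim : Tendsto (fun i : ℕ => ((∑ s ∈ Finset.Icc 1 i, w s : ℕ) : ℝ)/(i:ℝ)) atTop (nhds α) := hα
  have hm2 : (2:ℝ) ≤ (m:ℝ) := by exact_mod_cast hm
  have hγ2 : (2:ℝ) ≤ (m:ℝ) + α := by linarith
  have hγ0 : (0:ℝ) < (m:ℝ) + α := by linarith
  have h0β : 0 < β := by rw [hβ]; positivity
  have hβ1 : β < 1 := by rw [hβ, div_lt_one hγ0]; linarith
  have hP : 0 < Phi0 β := aux_phi0_pos β h0β hβ1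
  have h1P : (0:ℝ) < 1 + Phi0 β := by linarith
  have hx1 : (0:ℝ) < 1/(1 + Phi0 β) := by positivity
  have hx2 : (0:ℝ) < (1-β) * Phi0 β/(1 + Phi0 β) := by
    have : (0:ℝ) < 1 - β := by linarith
    positivity
  have hx3 : (0:ℝ) < β * Phi0 β/(1 + Phi0 β) := by positivity
  by_cases hcase : 2 < (m:ℝ) + α
  · -- Case A : m + α > 2, use form 2
    set c : ℝ := ((m:ℝ)+α) / Phi0 β with hcdef
    have hPle : Phi0 β ≤ (m:ℝ) + α := by
      have := aux_A_le ((m:ℝ)+α) hγ2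
      rwa [← hβ] at this
    have hPgt : (m:ℝ) + α < ((m:ℝ) + α - 1) * Phi0 β := by
      have := aux_A_gt ((m:ℝ)+α) hcase
      rwa [← hβ] at this
    have hc1 : 1 ≤ c := by
      rw [hcdef, le_div_iff₀ hP]
      linarith
    have hclt : c < (m:ℝ) + α - 1 := by
      rw [hcdef, div_lt_iff₀ hP]
      linarith
    have hc0 : (0:ℝ) < c := by linarith
    set jf : ℕ → ℕ := fun i => ⌊c * i⌋₊ + 1 with hjdef
    have hjlb : ∀ i : ℕ, c * i < jf i := fun i => by
      simp only [hjdef]; push_cast; exact Nat.lt_floor_add_one _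
    have hjub : ∀ i : ℕ, (jf i : ℝ) ≤ c * i + 1 := fun i => by
      simp only [hjdef]; push_cast
      have := Nat.floor_le (by positivity : (0:ℝ) ≤ c * i)
      linarith
    have hjmono : Monotone jf := by
      intro a b hab
      simp only [hjdef]
      have : c * a ≤ c * b := by
        apply mul_le_mul_of_nonneg_left _ hc0.le
        exact_mod_cast hab
      exact Nat.add_le_add_right (Nat.floor_mono this) 1
    have hjgap : ∀ i, (jf (i+1) : ℝ) - (jf i : ℝ) ≤ c + 1 := by
      intro i
      have h1 := hjlb i
      have h2 := hjub (i+1)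
      have h3 : c*(((i:ℕ):ℝ)+1) = c*i + c := by ring
      have h4 : ((i+1:ℕ):ℝ) = (i:ℝ)+1 := by push_cast; ring
      rw [h4] at h2
      linarith
    have hjlim : Tendsto (fun i : ℕ => (jf i : ℝ)/(i:ℝ)) atTop (nhds c) := by
      apply tendsto_of_tendsto_of_tendsto_of_le_of_le' (g := fun _ : ℕ => c)
        (h := fun i : ℕ => c + 2/(i:ℝ))
      · exact tendsto_const_nhds
      · have : Tendsto (fun i : ℕ => c + 2/(i:ℝ)) atTop (nhds (c + 0)) :=
          (tendsto_const_nhds (x := c)).add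
            ((tendsto_const_nhds (x := (2:ℝ))).div_atTop tendsto_natCast_atTop_atTop)
        simpa using this
      · filter_upwards [eventually_ge_atTop 1] with i hi
        have hi0 : (0:ℝ) < i := by exact_mod_cast hi
        rw [le_div_iff₀ hi0]
        have := hjlb i
        linarith
      · filter_upwards [eventually_ge_atTop 1] with i hi
        have hi0 : (0:ℝ) < i := by exact_mod_cast hi
        rw [div_le_iff₀ hi0]
        have h1 := hjub i
        have h2 : (c + 2/(i:ℝ))*i = c*i + 2 := by field_simp
        have h3 : (1:ℝ) ≤ 2 := by norm_num
        linarith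
    obtain ⟨hmono, hgap, hntop, hl1, hl2, hl3⟩ :=
      aux_seq m hm _ hSmono hSgap α c hα0 hc0 hSlim jf hjmono hjgap hjlim
    have hd1 : (0:ℝ) < c + (m:ℝ) + α := by linarith
    have eq1 : c / (c + (m:ℝ) + α) = 1/(1 + Phi0 β) := by
      rw [div_eq_div_iff hd1.ne' h1P.ne', hcdef]
      field_simp
      ring
    have hPne : Phi0 (1/((m:ℝ)+α)) ≠ 0 := by rw [← hβ]; exact hP.ne'
    have eq2 : ((m:ℝ) - 1 + α) / (c + (m:ℝ) + α) = (1-β) * Phi0 β/(1 + Phi0 β) := by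
      rw [div_eq_div_iff hd1.ne' h1P.ne', hcdef, hβ]
      field_simp [hPne]
      ring
    have eq3 : 1 / (c + (m:ℝ) + α) = β * Phi0 β/(1 + Phi0 β) := by
      rw [div_eq_div_iff hd1.ne' h1P.ne', hcdef, hβ]
      field_simp [hPne]
      ring
    rw [eq1] at hl1
    rw [eq2] at hl2
    rw [eq3] at hl3
    have hT : Tendsto
        (fun i => PhiPart (jf i + m*i + (∑ s ∈ Finset.Icc 1 i, w s) + 1)
          ![(m-1)*i + ∑ s ∈ Finset.Icc 1 i, w s, jf i, i, 1]) atTop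
        (nhds (1 + Phi0 β)) := by
      have h0 := aux_phiPart_tendsto _ _ _ hx2 hx1 hx3
        (fun i => (m-1)*i + ∑ s ∈ Finset.Icc 1 i, w s) jf (fun i => i)
        (fun i => jf i + m*i + (∑ s ∈ Finset.Icc 1 i, w s) + 1)
        (fun i => Nat.le_add_left 1 _) hntop hl2 hl1 hl3
      rwa [show ((1-β) * Phi0 β/(1 + Phi0 β)) ^ ((1-β) * Phi0 β/(1 + Phi0 β)) *
          (1/(1 + Phi0 β)) ^ (1/(1 + Phi0 β)) *
          (β * Phi0 β/(1 + Phi0 β)) ^ (β * Phi0 β/(1 + Phi0 β)) =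
          (1/(1 + Phi0 β)) ^ (1/(1 + Phi0 β)) *
          ((1-β) * Phi0 β/(1 + Phi0 β)) ^ ((1-β) * Phi0 β/(1 + Phi0 β)) *
          (β * Phi0 β/(1 + Phi0 β)) ^ (β * Phi0 β/(1 + Phi0 β)) from by ring,
        aux_identity β h0β hβ1, one_div, inv_inv] at h0
    have hΦ : ∀ᶠ i in atTop,
        |PhiPart (jf i + m*i + (∑ s ∈ Finset.Icc 1 i, w s) + 1)
          ![(m-1)*i + ∑ s ∈ Finset.Icc 1 i, w s, jf i, i, 1] - Phi0 β - 1| < ε := by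
      filter_upwards [hT (Metric.ball_mem_nhds (1 + Phi0 β) hε)] with i hi
      simp only [Set.mem_preimage, Metric.mem_ball, Real.dist_eq] at hi
      have : PhiPart (jf i + m*i + (∑ s ∈ Finset.Icc 1 i, w s) + 1)
          ![(m-1)*i + ∑ s ∈ Finset.Icc 1 i, w s, jf i, i, 1] - Phi0 β - 1
          = PhiPart (jf i + m*i + (∑ s ∈ Finset.Icc 1 i, w s) + 1)
          ![(m-1)*i + ∑ s ∈ Finset.Icc 1 i, w s, jf i, i, 1] - (1 + Phi0 β) := by ring
      rw [this]
      exact hi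
    have hδ : (0:ℝ) < ((m:ℝ) + α - 1 - c) / 2 := by linarith
    have hform : ∀ᶠ i : ℕ in atTop, jf i < (m-1)*i + ∑ s ∈ Finset.Icc 1 i, w s := by
      have hball := hSlim (Metric.ball_mem_nhds α hδ)
      filter_upwards [hball, eventually_ge_atTop 1,
        eventually_gt_atTop ⌈2/(((m:ℝ) + α - 1 - c) / 2)⌉₊] with i hi1 hi2 hi3
      simp only [Set.mem_preimage, Metric.mem_ball, Real.dist_eq, abs_lt] at hi1
      have hi0 : (0:ℝ) < i := by exact_mod_cast hi2
      set δ : ℝ := ((m:ℝ) + α - 1 - c) / 2 with hδdef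
      have hiδ : 2/δ < (i:ℝ) := by
        have h1 : (2/δ : ℝ) ≤ (⌈2/δ⌉₊ : ℝ) := Nat.le_ceil _
        have h2 : ((⌈2/δ⌉₊ : ℕ) : ℝ) < i := by exact_mod_cast hi3
        linarith
      have hS1 : (α - δ) * i < (∑ s ∈ Finset.Icc 1 i, w s : ℕ) := by
        have := hi1.1
        have h2 : (α - δ) < ((∑ s ∈ Finset.Icc 1 i, w s : ℕ):ℝ)/(i:ℝ) := by linarith
        calc (α - δ) * i < (((∑ s ∈ Finset.Icc 1 i, w s : ℕ):ℝ)/(i:ℝ)) * i := by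
              exact mul_lt_mul_of_pos_right h2 hi0
          _ = ((∑ s ∈ Finset.Icc 1 i, w s : ℕ):ℝ) := by field_simp
      have hfin : (jf i : ℝ) < (((m-1)*i + ∑ s ∈ Finset.Icc 1 i, w s : ℕ) : ℝ) := by
        have h1 := hjub i
        have hcast : (((m-1)*i + ∑ s ∈ Finset.Icc 1 i, w s : ℕ) : ℝ)
            = ((m:ℝ)-1)*i + ((∑ s ∈ Finset.Icc 1 i, w s : ℕ):ℝ) := by
          push_cast [Nat.cast_sub (show 1 ≤ m by omega)]
          ring
        rw [hcast]
        have hδi : 2 < δ * i := by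
          rw [div_lt_iff₀ (by positivity)] at hiδ
          linarith [hiδ]
        have e : ((m:ℝ)-1)*i + (α-δ)*i = c*i + δ*i := by rw [hδdef]; ring
        linarith [hS1, h1, hδi, e]
      exact_mod_cast hfin
    refine ⟨c + m + 3, fun i => jf i + m*i + (∑ s ∈ Finset.Icc 1 i, w s) + 1,
      fun i => ![(m-1)*i + ∑ s ∈ Finset.Icc 1 i, w s, jf i, i, 1],
      hmono, fun i => Nat.le_add_left 1 _, ?_⟩
    obtain ⟨i0, hi0⟩ := eventually_atTop.mp (hΦ.and hform)
    refine ⟨i0, fun i hi => ⟨(hi0 i hi).1, hgap i, i, jf i, rfl, Or.inr ⟨rfl, ?_, (hi0 i hi).2⟩⟩⟩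
    · -- i ≤ jf i
      have h1 := hjlb i
      have : (i:ℝ) < jf i := by nlinarith [hc1, Nat.cast_nonneg (α := ℝ) i]
      have := this.le
      exact_mod_cast this
  · -- Case B : m + α = 2, so m = 2 and α = 0, use form 1
    have hγeq : (m:ℝ) + α = 2 := le_antisymm (not_lt.mp hcase) hγ2
    have hαz : α = 0 := by linarith
    subst hαz
    have hmeq : m = 2 := by
      have : (m:ℝ) = 2 := by linarith
      exact_mod_cast this
    subst hmeq
    have hβhalf : β = 1/2 := by rw [hβ]; norm_num
    have hP2 : Phi0 β = 2 := by rw [hβhalf]; exact aux_phi0_half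
    set jf : ℕ → ℕ := fun i => i + (∑ s ∈ Finset.Icc 1 i, w s) + 1 with hjdef
    have hjmono : Monotone jf := by
      intro a b hab
      have h' : (∑ s ∈ Finset.Icc 1 a, w s) ≤ ∑ s ∈ Finset.Icc 1 b, w s := hSmono hab
      simp only [hjdef]
      omega
    have hjgap : ∀ i, (jf (i+1) : ℝ) - (jf i : ℝ) ≤ 1 + 1 := by
      intro i
      have h := hSgap i
      have : jf (i+1) ≤ jf i + 2 := by simp only [hjdef]; omega
      have h2 : (jf (i+1) : ℝ) ≤ (jf i : ℝ) + 2 := by exact_mod_cast this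
      linarith
    have hjlim : Tendsto (fun i : ℕ => (jf i : ℝ)/(i:ℝ)) atTop (nhds 1) := by
      have key : Tendsto (fun i : ℕ => 1 + ((∑ s ∈ Finset.Icc 1 i, w s : ℕ):ℝ)/(i:ℝ) + 1/(i:ℝ))
          atTop (nhds (1 + 0 + 0)) := by
        refine ((tendsto_const_nhds (x := (1:ℝ))).add hSlim).add
          ((tendsto_const_nhds (x := (1:ℝ))).div_atTop tendsto_natCast_atTop_atTop)
      rw [show (1:ℝ) + 0 + 0 = 1 by norm_num] at key
      refine key.congr' ?_
      filter_upwards [eventually_ge_atTop 1] with i hi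
      have hi0 : (i:ℝ) ≠ 0 := by
        have : (0:ℝ) < i := by exact_mod_cast hi
        exact this.ne'
      simp only [hjdef]
      push_cast
      field_simp
    obtain ⟨hmono, hgap, hntop, hl1, hl2, hl3⟩ :=
      aux_seq 2 le_rfl _ hSmono hSgap 0 1 le_rfl one_pos hSlim jf hjmono hjgap hjlim
    rw [show (1:ℝ) / (1 + ((2:ℕ):ℝ) + 0) = 1/(1 + Phi0 β) from by rw [hP2]; norm_num] at hl1
    rw [show (((2:ℕ):ℝ) - 1 + 0) / (1 + ((2:ℕ):ℝ) + 0) = (1-β) * Phi0 β/(1 + Phi0 β) from by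
      rw [hP2, hβhalf]; norm_num] at hl2
    rw [show (1:ℝ) / (1 + ((2:ℕ):ℝ) + 0) = β * Phi0 β/(1 + Phi0 β) from by
      rw [hP2, hβhalf]; norm_num] at hl3
    have hT : Tendsto
        (fun i => PhiPart (jf i + 2*i + (∑ s ∈ Finset.Icc 1 i, w s) + 1)
          ![jf i, (2-1)*i + ∑ s ∈ Finset.Icc 1 i, w s, i, 1]) atTop
        (nhds (1 + Phi0 β)) := by
      have h0 := aux_phiPart_tendsto _ _ _ hx1 hx2 hx3
        jf (fun i => (2-1)*i + ∑ s ∈ Finset.Icc 1 i, w s) (fun i => i)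
        (fun i => jf i + 2*i + (∑ s ∈ Finset.Icc 1 i, w s) + 1)
        (fun i => Nat.le_add_left 1 _) hntop hl1 hl2 hl3
      rwa [aux_identity β h0β hβ1, one_div, inv_inv] at h0
    have hΦ : ∀ᶠ i in atTop,
        |PhiPart (jf i + 2*i + (∑ s ∈ Finset.Icc 1 i, w s) + 1)
          ![jf i, (2-1)*i + ∑ s ∈ Finset.Icc 1 i, w s, i, 1] - Phi0 β - 1| < ε := by
      filter_upwards [hT (Metric.ball_mem_nhds (1 + Phi0 β) hε)] with i hi
      simp only [Set.mem_preimage, Metric.mem_ball, Real.dist_eq] at hi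
      have e : PhiPart (jf i + 2*i + (∑ s ∈ Finset.Icc 1 i, w s) + 1)
          ![jf i, (2-1)*i + ∑ s ∈ Finset.Icc 1 i, w s, i, 1] - Phi0 β - 1
          = PhiPart (jf i + 2*i + (∑ s ∈ Finset.Icc 1 i, w s) + 1)
          ![jf i, (2-1)*i + ∑ s ∈ Finset.Icc 1 i, w s, i, 1] - (1 + Phi0 β) := by ring
      rw [e]
      exact hi
    refine ⟨1 + (2:ℕ) + 3, fun i => jf i + 2*i + (∑ s ∈ Finset.Icc 1 i, w s) + 1,
      fun i => ![jf i, (2-1)*i + ∑ s ∈ Finset.Icc 1 i, w s, i, 1],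
      hmono, fun i => Nat.le_add_left 1 _, ?_⟩
    obtain ⟨i0, hi0⟩ := eventually_atTop.mp hΦ
    refine ⟨i0, fun i hi => ⟨hi0 i hi, hgap i, i, jf i, rfl, Or.inl ⟨rfl, ?_⟩⟩⟩
    simp only [hjdef]
    omega
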